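/- Let H be a separable infinite-dimensional complex Hilbert space, let E be a complex inner product space of finite dimension N ≥ 1, and let (ψ_n, φ_n)_{n ∈ ℕ} (with ψ_n ∈ H, φ_n ∈ E) be an orthonormal (Hilbert) basis of H × E with the product inner product. Let Θ ⊆ ℕ be a finite set of cardinality N and suppose (φ_n)_{n ∈ Θ} is linearly independent in E. Then there exist an inner product ⟨·,·⟩' on H and constants 0 < c ≤ C such that c‖y‖² ≤ ⟨y,y⟩' ≤ C‖y‖² for all y ∈ H, and such that the family (ψ_n)_{n ∈ ℕ∖Θ} is an orthonormal basis of H with respect to ⟨·,·⟩' (i.e., it is orthonormal for ⟨·,·⟩' and its linear span is dense in H). -/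

import Mathlib

open scoped InnerProductSpace

private lemma aux_mem_orth_span {𝕜 V : Type*} [RCLike 𝕜] [NormedAddCommGroup V]
    [InnerProductSpace 𝕜 V] (s : Set V) (x : V)
    (h : ∀ u ∈ s, (inner 𝕜 u x) = 0) : x ∈ (Submodule.span 𝕜 s)ᗮ := by
  rw [Submodule.mem_orthogonal]
  intro u hu
  induction hu using Submodule.span_induction with
  | mem u hu => exact h u hu
  | zero => simp
  | add u w _ _ h1 h2 => simp [inner_add_left, h1, h2]
  | smul c u _ h1 => simp [inner_smul_left, h1]

/-- If `(φ n)_{n ∈ Θ}` is linearly independent, then there are an inner product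
`⟨·,·⟩'` on `H` and constants `0 < c ≤ C` with `c‖y‖² ≤ ⟨y,y⟩' ≤ C‖y‖²`, for which
`(ψ n)_{n ∉ Θ}` is orthonormal and has dense linear span in `H`. -/
theorem stmt_5
    {H : Type*} [NormedAddCommGroup H] [InnerProductSpace ℂ H] [CompleteSpace H]
    [TopologicalSpace.SeparableSpace H] (hH : ¬ FiniteDimensional ℂ H)
    {E : Type*} [NormedAddCommGroup E] [InnerProductSpace ℂ E] [FiniteDimensional ℂ E]
    (N : ℕ) (hN : 1 ≤ N) (hE : Module.finrank ℂ E = N)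
    (ψ : ℕ → H) (φ : ℕ → E)
    (hON : Orthonormal ℂ (fun n : ℕ => (WithLp.equiv 2 (H × E)).symm (ψ n, φ n)))
    (hTotal : (Submodule.span ℂ
        (Set.range (fun n : ℕ => (WithLp.equiv 2 (H × E)).symm (ψ n, φ n)))).topologicalClosure
      = ⊤)
    (Θ : Finset ℕ) (hΘ : Θ.card = N)
    (hLI : LinearIndependent ℂ (fun n : Θ => φ n)) :
    ∃ (p : InnerProductSpace.Core ℂ H) (c C : ℝ), 0 < c ∧ c ≤ C ∧
      (∀ y : H, c * ‖y‖ ^ 2 ≤ RCLike.re (p.inner y y) ∧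
        RCLike.re (p.inner y y) ≤ C * ‖y‖ ^ 2) ∧
      (∀ m ∉ Θ, ∀ n ∉ Θ, p.inner (ψ m) (ψ n) = if m = n then 1 else 0) ∧
      (Submodule.span ℂ (ψ '' {n : ℕ | n ∉ Θ})).topologicalClosure = ⊤ := by
  classical
  set v : ℕ → WithLp 2 (H × E) := fun n => (WithLp.equiv 2 (H × E)).symm (ψ n, φ n) with hv
  have hONij : ∀ m n : ℕ, (inner ℂ (ψ m) (ψ n) : ℂ) + inner ℂ (φ m) (φ n)
      = if m = n then 1 else 0 := by
    intro m n
    have := orthonormal_iff_ite.mp hON m n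
    simpa [hv, WithLp.prod_inner_apply] using this
  -- Θ nonempty
  have hne : Θ.Nonempty := Finset.card_pos.mp (by omega)
  haveI : Nonempty Θ := hne.to_subtype
  have hcard : Fintype.card Θ = Module.finrank ℂ E := by
    simp [hE, hΘ, Fintype.card_coe]
  have hspan : Submodule.span ℂ (Set.range fun n : Θ => φ (n : ℕ)) = ⊤ := by
    have h := (basisOfLinearIndependentOfCardEqFinrank hLI hcard).span_eq
    rwa [coe_basisOfLinearIndependentOfCardEqFinrank] at h
  -- the map L
  let L : E →ₗ[ℂ] (Θ → ℂ) := LinearMap.pi fun n => (innerSL ℂ (φ (n : ℕ))).toLinearMap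
  have hLapp : ∀ (x : E) (n : Θ), L x n = inner ℂ (φ (n : ℕ)) x := fun _ _ => rfl
  have hLinj : Function.Injective L := by
    rw [← LinearMap.ker_eq_bot, Submodule.eq_bot_iff]
    intro x hx
    have hx' : ∀ n : Θ, (inner ℂ (φ (n : ℕ)) x : ℂ) = 0 := by
      intro n
      have := congrFun (LinearMap.mem_ker.mp hx) n
      simpa [hLapp] using this
    have hxo : x ∈ (Submodule.span ℂ (Set.range fun n : Θ => φ (n : ℕ)))ᗮ := by
      apply aux_mem_orth_span
      rintro u ⟨n, rfl⟩
      exact hx' n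
    rw [hspan] at hxo
    simpa [Submodule.top_orthogonal_eq_bot] using hxo
  let Le : E ≃ₗ[ℂ] (Θ → ℂ) := LinearMap.linearEquivOfInjective L hLinj
    (by simp [hE, ← hΘ, Fintype.card_coe])
  let S : H →L[ℂ] (Θ → ℂ) := ContinuousLinearMap.pi fun n => -(innerSL ℂ (ψ (n : ℕ)))
  let T : H →L[ℂ] E := (LinearMap.toContinuousLinearMap Le.symm.toLinearMap).comp S
  have hT : ∀ (y : H) (n : Θ), (inner ℂ (φ (n : ℕ)) (T y) : ℂ) = -inner ℂ (ψ (n : ℕ)) y := by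
    intro y n
    have hLe : ∀ x, L x = Le x := fun x =>
      (LinearMap.linearEquivOfInjective_apply hLinj _ x).symm
    have h1 : L (T y) = S y := by
      show L (Le.symm (S y)) = S y
      rw [hLe, Le.apply_symm_apply]
    have := congrFun h1 n
    simpa [hLapp, S] using this
  have hTψ : ∀ m ∉ Θ, T (ψ m) = φ m := by
    intro m hm
    apply hLinj
    funext n
    have hnm : (n : ℕ) ≠ m := fun h => hm (h ▸ n.2)
    have h3 := hONij (n : ℕ) m
    rw [if_neg hnm] at h3
    rw [hLapp, hLapp, hT]
    linear_combination -h3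
  -- the new inner product
  let p : InnerProductSpace.Core ℂ H :=
  { inner := fun y z => inner ℂ y z + inner ℂ (T y) (T z)
    conj_inner_symm := fun x y => by
      simp only [map_add, inner_conj_symm]
    re_inner_nonneg := fun x => by
      show 0 ≤ RCLike.re ((inner ℂ x x : ℂ) + inner ℂ (T x) (T x))
      rw [map_add, inner_self_eq_norm_sq, inner_self_eq_norm_sq]
      positivity
    add_left := fun x y z => by
      simp only [map_add, inner_add_left]
      ring
    smul_left := fun x y r => by
      simp only [map_smul, inner_smul_left]
      ring
    definite := fun x hx => by
      have hx' : (inner ℂ x x : ℂ) + inner ℂ (T x) (T x) = 0 := hx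
      have h1 := congrArg RCLike.re hx'
      rw [map_add, inner_self_eq_norm_sq, inner_self_eq_norm_sq] at h1
      simp only [map_zero] at h1
      have hx0 : ‖x‖ = 0 := by nlinarith [norm_nonneg x, norm_nonneg (T x)]
      simpa using hx0 }
  have hpinner : ∀ y z : H, p.inner y z = inner ℂ y z + inner ℂ (T y) (T z) := fun _ _ => rfl
  refine ⟨p, 1, 1 + ‖T‖ ^ 2, one_pos, le_add_of_nonneg_right (by positivity), ?_, ?_, ?_⟩
  · intro y
    rw [hpinner, map_add, inner_self_eq_norm_sq, inner_self_eq_norm_sq]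
    constructor
    · nlinarith [norm_nonneg (T y)]
    · have hb := T.le_opNorm y
      nlinarith [norm_nonneg (T y), norm_nonneg y, T.opNorm_nonneg]
  · intro m hm n hn
    rw [hpinner, hTψ m hm, hTψ n hn]
    exact hONij m n
  -- density
  rw [eq_top_iff]
  intro y _
  let w : H → WithLp 2 (H × E) := fun z => (WithLp.equiv 2 (H × E)).symm (z, T z)
  let F : Submodule ℂ (WithLp 2 (H × E)) := Submodule.span ℂ (v '' Θ)
  let Gs : Submodule ℂ (WithLp 2 (H × E)) := Submodule.span ℂ (v '' {n | n ∉ Θ})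
  have hwinner : ∀ (z : H) (n : ℕ), (inner ℂ (v n) (w z) : ℂ)
      = inner ℂ (ψ n) z + inner ℂ (φ n) (T z) := fun _ _ => rfl
  have hwF : ∀ z, w z ∈ Fᗮ := by
    intro z
    apply aux_mem_orth_span
    rintro u ⟨n, hnΘ, rfl⟩
    rw [hwinner, hT z ⟨n, hnΘ⟩]
    ring
  haveI : FiniteDimensional ℂ F :=
    FiniteDimensional.span_of_finite ℂ (Θ.finite_toSet.image v)
  have hFGs : F ≤ Gsᗮ := by
    apply Submodule.isOrtho_span.mpr
    rintro u ⟨m, hmΘ, rfl⟩ x ⟨n, hnΘ, rfl⟩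
    have hmn : m ≠ n := fun h => hnΘ (h ▸ hmΘ)
    have := orthonormal_iff_ite.mp hON m n
    rwa [if_neg hmn] at this
  have hKbot : (Submodule.span ℂ (Set.range v))ᗮ = ⊥ :=
    Submodule.topologicalClosure_eq_top_iff.mp hTotal
  have hGsO : Gsᗮ ≤ F := by
    intro x hx
    obtain ⟨f, hf, g, hg, rfl⟩ := F.exists_add_mem_mem_orthogonal x
    have hg0 : g = 0 := by
      have hgK : g ∈ (Submodule.span ℂ (Set.range v))ᗮ := by
        apply aux_mem_orth_span
        rintro u ⟨n, rfl⟩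
        by_cases hn : n ∈ Θ
        · exact hg (v n) (Submodule.subset_span ⟨n, hn, rfl⟩)
        · have hgGs : g ∈ Gsᗮ := by
            have hfGs : f ∈ Gsᗮ := hFGs hf
            have : f + g - f ∈ Gsᗮ := Submodule.sub_mem _ hx hfGs
            simpa using this
          exact hgGs (v n) (Submodule.subset_span ⟨n, hn, rfl⟩)
      rw [hKbot] at hgK
      simpa using hgK
    rw [hg0, add_zero]
    exact hf
  have hsub : Fᗮ ≤ Gs.topologicalClosure := by
    rw [← Submodule.orthogonal_orthogonal_eq_closure]
    exact Submodule.orthogonal_le hGsO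
  have hwG : w y ∈ closure (Gs : Set (WithLp 2 (H × E))) := by
    have := hsub (hwF y)
    rwa [← Submodule.topologicalClosure_coe, SetLike.mem_coe]
  let π : WithLp 2 (H × E) →L[ℂ] H :=
    (ContinuousLinearMap.fst ℂ H E).comp
      (WithLp.prodContinuousLinearEquiv 2 ℂ H E).toContinuousLinearMap
  have hπw : π (w y) = y := rfl
  have hy : y ∈ closure (π '' (Gs : Set (WithLp 2 (H × E)))) := by
    have h1 : π (w y) ∈ π '' closure (Gs : Set (WithLp 2 (H × E))) := ⟨_, hwG, rfl⟩
    rw [hπw] at h1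
    exact image_closure_subset_closure_image π.continuous h1
  have himg : π '' (Gs : Set (WithLp 2 (H × E)))
      ⊆ (Submodule.span ℂ (ψ '' {n : ℕ | n ∉ Θ}) : Set H) := by
    have hmap : Submodule.map (π : WithLp 2 (H × E) →ₗ[ℂ] H) Gs
        = Submodule.span ℂ (ψ '' {n : ℕ | n ∉ Θ}) := by
      rw [Submodule.map_span, ← Set.image_comp]
      rfl
    rintro _ ⟨u, hu, rfl⟩
    rw [← hmap]
    exact ⟨u, hu, rfl⟩
  show y ∈ (Submodule.span ℂ (ψ '' {n : ℕ | n ∉ Θ})).topologicalClosure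
  rw [← SetLike.mem_coe, Submodule.topologicalClosure_coe]
  exact closure_mono himg hy
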